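/- arXiv:2510.08494 — 5 statements merged into one kernel-verified Lean document; each statement's English description precedes it below -/
import Mathlib

section
/- For f(a) = Σ_{i=1}^k Π_{j=1}^p (1_{a_j=i} − 1/k), if the tuple a ∈ [k]^p contains at least 2 distinct values, then |f(a)| ≤ 2/k. -/
open Finset

lemma key_lemma (k : ℕ) (hk : 2 ≤ k) :
    ∀ n (c : Fin k → ℕ), (∑ i, c i = n) →
    (∃ i j : Fin k, i ≠ j ∧ 0 < c i ∧ 0 < c j) →
    |∑ i : Fin k, (1 - 1/(k:ℝ))^(c i) * (-(1/(k:ℝ)))^(n - c i)| ≤ 2/(k:ℝ) := by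
  intro n
  induction n using Nat.strong_induction_on with
  | _ n IH =>
  intro c hsum h2
  obtain ⟨i, j, hij, hi, hj⟩ := h2
  have hk0 : (0:ℝ) < k := by
    have : 0 < k := by omega
    exact_mod_cast this
  have hkR : (2:ℝ) ≤ k := by exact_mod_cast hk
  set q : ℝ := 1/(k:ℝ) with hqdef
  set r : ℝ := 1 - q with hrdef
  have hq0 : 0 < q := by positivity
  have hq2 : q ≤ 1/2 := by
    rw [hqdef, div_le_div_iff₀ hk0 (by norm_num)]
    linarith
  have hq1 : q ≤ 1 := by linarith
  have hr0 : 0 ≤ r := by rw [hrdef]; linarith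
  have hr1 : r ≤ 1 := by rw [hrdef]; linarith
  have hrq : r + q = 1 := by rw [hrdef]; ring
  have hpair : ∀ x y : Fin k, x ≠ y → c x + c y ≤ n := by
    intro x y hxy
    have h1 : ∑ l ∈ ({x,y} : Finset (Fin k)), c l ≤ ∑ l, c l :=
      Finset.sum_le_sum_of_subset (Finset.subset_univ _)
    rwa [Finset.sum_pair hxy, hsum] at h1
  have hn2 : 2 ≤ n := by
    have := hpair i j hij
    omega
  rcases eq_or_lt_of_le hn2 with hn | hn3
  · -- base case n = 2
    have hjm : j ∈ (univ : Finset (Fin k)).erase i :=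
      Finset.mem_erase.mpr ⟨hij.symm, mem_univ j⟩
    have e1 : c i + ∑ l ∈ (univ : Finset (Fin k)).erase i, c l = n := by
      rw [Finset.add_sum_erase _ c (mem_univ i), hsum]
    have e2 : c j + ∑ l ∈ ((univ : Finset (Fin k)).erase i).erase j, c l
        = ∑ l ∈ (univ : Finset (Fin k)).erase i, c l :=
      Finset.add_sum_erase _ c hjm
    have hci : c i = 1 := by omega
    have hcj : c j = 1 := by omega
    have hrest0 : ∑ l ∈ ((univ : Finset (Fin k)).erase i).erase j, c l = 0 := by omega
    have hzero : ∀ l ∈ ((univ : Finset (Fin k)).erase i).erase j, c l = 0 := by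
      intro l hl
      exact (Finset.sum_eq_zero_iff.mp hrest0) l hl
    have hsplit : ∑ l : Fin k, r^(c l) * (-q)^(n - c l)
        = r^(c i) * (-q)^(n - c i) + (r^(c j) * (-q)^(n - c j)
          + ∑ l ∈ ((univ : Finset (Fin k)).erase i).erase j, r^(c l) * (-q)^(n - c l)) := by
      rw [Finset.add_sum_erase _ (fun l => r^(c l) * (-q)^(n - c l)) hjm,
        Finset.add_sum_erase _ (fun l => r^(c l) * (-q)^(n - c l)) (mem_univ i)]
    have hrest : ∑ l ∈ ((univ : Finset (Fin k)).erase i).erase j, r^(c l) * (-q)^(n - c l)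
        = ((k : ℝ) - 2) * q^2 := by
      have hterm : ∀ l ∈ ((univ : Finset (Fin k)).erase i).erase j,
          r^(c l) * (-q)^(n - c l) = q^2 := by
        intro l hl
        rw [hzero l hl, ← hn]
        norm_num [neg_pow]
      rw [Finset.sum_congr rfl hterm]
      rw [Finset.sum_const, Finset.card_erase_of_mem hjm, Finset.card_erase_of_mem (mem_univ i),
        Finset.card_univ, Fintype.card_fin]
      have : ((k - 1 - 1 : ℕ) : ℝ) = (k:ℝ) - 2 := by
        push_cast [Nat.cast_sub (by omega : 1 ≤ k), Nat.cast_sub (by omega : 1 ≤ k - 1)]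
        ring
      rw [nsmul_eq_mul, this]
    rw [hsplit, hrest, hci, hcj, ← hn]
    have hval : r^(1:ℕ) * (-q)^(2-1:ℕ) + (r^(1:ℕ) * (-q)^(2-1:ℕ) + ((k:ℝ) - 2) * q^2) = -q := by
      have hkq : (k:ℝ) * q = 1 := by
        rw [hqdef]; field_simp
      have : r = 1 - q := hrdef
      norm_num [this]
      nlinarith [hkq]
    rw [hval, abs_neg, abs_of_pos hq0, hqdef]
    rw [div_le_div_iff₀ hk0 hk0]
    linarith
  · -- inductive step n ≥ 3
    have hchoice : ∃ i0 : Fin k, 0 < c i0 ∧ ∃ a b : Fin k, a ≠ b ∧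
        0 < Function.update c i0 (c i0 - 1) a ∧ 0 < Function.update c i0 (c i0 - 1) b := by
      by_cases hm : ∃ m, 2 ≤ c m
      · obtain ⟨m, hm2⟩ := hm
        rcases eq_or_ne i m with rfl | him
        · refine ⟨i, by omega, i, j, hij, ?_, ?_⟩
          · rw [Function.update_self]; omega
          · rw [Function.update_of_ne (fun h => hij h.symm)]; omega
        · refine ⟨m, by omega, m, i, fun h => him h.symm, ?_, ?_⟩
          · rw [Function.update_self]; omega
          · rw [Function.update_of_ne him]; omega
      · push_neg at hm
        have hci1 : c i = 1 := by have := hm i; omega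
        have hcj1 : c j = 1 := by have := hm j; omega
        have e1 : c i + ∑ l ∈ (univ : Finset (Fin k)).erase i, c l = n := by
          rw [Finset.add_sum_erase _ c (mem_univ i), hsum]
        have hjm : j ∈ (univ : Finset (Fin k)).erase i :=
          Finset.mem_erase.mpr ⟨hij.symm, mem_univ j⟩
        have e2 : c j + ∑ l ∈ ((univ : Finset (Fin k)).erase i).erase j, c l
            = ∑ l ∈ (univ : Finset (Fin k)).erase i, c l :=
          Finset.add_sum_erase _ c hjm
        have hrpos : ∑ l ∈ ((univ : Finset (Fin k)).erase i).erase j, c l ≠ 0 := by omega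
        obtain ⟨l, hl, hlpos⟩ := Finset.exists_ne_zero_of_sum_ne_zero hrpos
        have hlj : l ≠ j := (Finset.mem_erase.mp hl).1
        have hli : l ≠ i := (Finset.mem_erase.mp (Finset.mem_of_mem_erase hl)).1
        refine ⟨i, by omega, j, l, fun h => hlj h.symm, ?_, ?_⟩
        · rw [Function.update_of_ne (fun h => hij h.symm)]; omega
        · rw [Function.update_of_ne hli]; omega
    obtain ⟨i0, hi0, a, b, hab, ha', hb'⟩ := hchoice
    set c' : Fin k → ℕ := Function.update c i0 (c i0 - 1) with hc'def
    have hc'i0 : c' i0 = c i0 - 1 := Function.update_self _ _ _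
    have hc'ne : ∀ l, l ≠ i0 → c' l = c l := fun l hl => Function.update_of_ne hl _ _
    have e1 : c i0 + ∑ l ∈ (univ : Finset (Fin k)).erase i0, c l = n := by
      rw [Finset.add_sum_erase _ c (mem_univ i0), hsum]
    have hsum' : ∑ l, c' l = n - 1 := by
      rw [hc'def, Finset.sum_update_of_mem (Finset.mem_univ i0),
        Finset.sdiff_singleton_eq_erase]
      omega
    -- second positive in c' different from i0
    have hw : ∃ w, w ≠ i0 ∧ 0 < c' w := by
      rcases eq_or_ne a i0 with rfl | haa
      · exact ⟨b, fun h => hab h.symm, hb'⟩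
      · exact ⟨a, haa, ha'⟩
    obtain ⟨w, hwi0, hwpos⟩ := hw
    have hc'pair : c' i0 + c' w ≤ n - 1 := by
      have h1 : ∑ l ∈ ({i0, w} : Finset (Fin k)), c' l ≤ ∑ l, c' l :=
        Finset.sum_le_sum_of_subset (Finset.subset_univ _)
      rwa [Finset.sum_pair (fun h => hwi0 h.symm), hsum'] at h1
    have he2 : 1 ≤ (n-1) - c' i0 := by omega
    have hIH := IH (n-1) (by omega) c' hsum' ⟨a, b, hab, ha', hb'⟩
    -- the recursion identity
    set T : ℝ := r^(c' i0) * (-q)^((n-1) - c' i0) with hTdef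
    have hci0n : c i0 ≤ n := by omega
    have hterm_ne : ∀ l ∈ (univ : Finset (Fin k)).erase i0,
        r^(c l) * (-q)^(n - c l) = -q * (r^(c' l) * (-q)^((n-1) - c' l)) := by
      intro l hl
      have hli0 : l ≠ i0 := (Finset.mem_erase.mp hl).1
      have hcl : c l ≤ n - 1 := by have := hpair l i0 hli0; omega
      rw [hc'ne l hli0]
      have hexp : n - c l = ((n-1) - c l) + 1 := by omega
      rw [hexp, pow_succ]
      ring
    have hterm_i0 : r^(c i0) * (-q)^(n - c i0) = r * T := by
      have h1 : c i0 = c' i0 + 1 := by omega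
      have h2 : n - c i0 = (n-1) - c' i0 := by omega
      rw [hTdef, h2, h1, pow_succ]
      ring
    have hFsplit : ∑ l : Fin k, r^(c l) * (-q)^(n - c l)
        = r * T + ∑ l ∈ (univ : Finset (Fin k)).erase i0, r^(c l) * (-q)^(n - c l) := by
      rw [← Finset.add_sum_erase _ (fun l => r^(c l) * (-q)^(n - c l)) (mem_univ i0), hterm_i0]
    have hF'split : ∑ l : Fin k, r^(c' l) * (-q)^((n-1) - c' l)
        = T + ∑ l ∈ (univ : Finset (Fin k)).erase i0, r^(c' l) * (-q)^((n-1) - c' l) := by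
      rw [← Finset.add_sum_erase _ (fun l => r^(c' l) * (-q)^((n-1) - c' l)) (mem_univ i0), hTdef]
    have hrec : ∑ l : Fin k, r^(c l) * (-q)^(n - c l)
        = -q * (∑ l : Fin k, r^(c' l) * (-q)^((n-1) - c' l)) + T := by
      rw [hFsplit, Finset.sum_congr rfl hterm_ne, ← Finset.mul_sum, hF'split]
      linear_combination T * hrq
    rw [hrec]
    have hTabs : |T| ≤ q := by
      rw [hTdef, abs_mul, abs_pow, abs_pow, abs_neg, abs_of_pos hq0, abs_of_nonneg hr0]
      calc r ^ c' i0 * q ^ ((n-1) - c' i0) ≤ 1 * q ^ ((n-1) - c' i0) := by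
            apply mul_le_mul_of_nonneg_right (pow_le_one₀ hr0 hr1) (by positivity)
        _ = q ^ ((n-1) - c' i0) := by ring
        _ ≤ q ^ (1:ℕ) := pow_le_pow_of_le_one hq0.le hq1 he2
        _ = q := pow_one q
    calc |(-q) * (∑ l : Fin k, r^(c' l) * (-q)^((n-1) - c' l)) + T|
        ≤ |(-q) * (∑ l : Fin k, r^(c' l) * (-q)^((n-1) - c' l))| + |T| := abs_add_le _ _
      _ = q * |∑ l : Fin k, r^(c' l) * (-q)^((n-1) - c' l)| + |T| := by
          rw [abs_mul, abs_neg, abs_of_pos hq0]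
      _ ≤ q * (2/(k:ℝ)) + q := by
          gcongr
      _ ≤ 2/(k:ℝ) := by
          rw [hqdef]
          have h1 : 1/(k:ℝ)*(2/(k:ℝ)) ≤ 1/(k:ℝ) := by
            have h2 : (2:ℝ)/(k:ℝ) ≤ 1 := by
              rw [div_le_one hk0]; linarith
            calc 1/(k:ℝ)*(2/(k:ℝ)) ≤ 1/(k:ℝ)*1 :=
                  mul_le_mul_of_nonneg_left h2 (by positivity)
              _ = 1/(k:ℝ) := mul_one _
          have h3 : (2:ℝ)/(k:ℝ) = 1/(k:ℝ) + 1/(k:ℝ) := by ring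
          linarith

/-- `f(a) = ∑_{i=1}^k ∏_{j=1}^p (1_{a_j=i} − 1/k)`. -/
noncomputable def fcom (k p : ℕ) (a : Fin p → Fin k) : ℝ :=
  ∑ i : Fin k, ∏ j : Fin p, ((if a j = i then (1 : ℝ) else 0) - 1 / (k : ℝ))

/-- If the tuple `a` contains at least two distinct values, then `|f(a)| ≤ 2/k`. -/
theorem stmt8 (k p : ℕ) (hk : 2 ≤ k) (hp : 2 ≤ p) (a : Fin p → Fin k)
    (ha : ∃ i j : Fin p, a i ≠ a j) :
    |fcom k p a| ≤ 2 / (k : ℝ) := by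
  set c : Fin k → ℕ := fun i => ((univ : Finset (Fin p)).filter (fun j => a j = i)).card with hcdef
  have hsum : ∑ i, c i = p := by
    rw [hcdef]
    rw [← Finset.card_eq_sum_card_fiberwise (f := a) (s := univ) (t := univ)
      (fun x _ => mem_univ _)]
    simp
  have hprod : ∀ i : Fin k, ∏ j : Fin p, ((if a j = i then (1:ℝ) else 0) - 1/(k:ℝ))
      = (1 - 1/(k:ℝ))^(c i) * (-(1/(k:ℝ)))^(p - c i) := by
    intro i
    have hpt : ∀ j : Fin p, ((if a j = i then (1:ℝ) else 0) - 1/(k:ℝ))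
        = if a j = i then (1 - 1/(k:ℝ)) else -(1/(k:ℝ)) := by
      intro j; split_ifs <;> ring
    rw [Finset.prod_congr rfl (fun j _ => hpt j), Finset.prod_ite,
      Finset.prod_const, Finset.prod_const]
    have hcard : ((univ : Finset (Fin p)).filter (fun j => a j = i)).card
        + ((univ : Finset (Fin p)).filter (fun j => ¬ a j = i)).card = p := by
      have h := Finset.card_filter_add_card_filter_not
        (s := (univ : Finset (Fin p))) (p := fun j => a j = i)
      rw [Finset.card_univ, Fintype.card_fin] at h
      exact h
    have hB : ((univ : Finset (Fin p)).filter (fun j => ¬ a j = i)).card = p - c i := by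
      have hA : ((univ : Finset (Fin p)).filter (fun j => a j = i)).card = c i := rfl
      omega
    rw [hB]
  obtain ⟨j1, j2, hne⟩ := ha
  have hpos1 : 0 < c (a j1) := by
    rw [hcdef]
    exact Finset.card_pos.mpr ⟨j1, by simp⟩
  have hpos2 : 0 < c (a j2) := by
    rw [hcdef]
    exact Finset.card_pos.mpr ⟨j2, by simp⟩
  have := key_lemma k hk p c hsum ⟨a j1, a j2, hne, hpos1, hpos2⟩
  rw [fcom, Finset.sum_congr rfl (fun i _ => hprod i)]
  exact this
end

section
/- For x uniform in [k]^n and any p-subset S of [n], the second moment of f(x_S) equals μ = ((k−1)^p + (−1)^p (k−1)) / k^{2p−1}, where f(a) = Σ_{i=1}^k Π_{j=1}^p (1_{a_j=i} − 1/k). -/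
open Finset

/-- `f(x_S) = ∑_{i=1}^k ∏_{j ∈ S} (1_{x_j=i} − 1/k)`, the symmetric function `f`
applied to the restriction of `x` to the subset `S`. -/
noncomputable def fSet (k n : ℕ) (S : Finset (Fin n)) (x : Fin n → Fin k) : ℝ :=
  ∑ i : Fin k, ∏ j ∈ S, ((if x j = i then (1 : ℝ) else 0) - 1 / (k : ℝ))

/-- Sum over all tuples of a product over a subset factors. -/
lemma sum_prod_restrict (k n : ℕ) [NeZero k] (S : Finset (Fin n)) (h : Fin k → ℝ) :
    ∑ x : Fin n → Fin k, ∏ j ∈ S, h (x j)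
      = (∑ a : Fin k, h a) ^ S.card * (k : ℝ) ^ (n - S.card) := by
  have h1 : ∀ x : Fin n → Fin k, (∏ j ∈ S, h (x j))
      = ∏ j : Fin n, (if j ∈ S then h (x j) else 1) := by
    intro x
    rw [Finset.prod_ite_mem, Finset.univ_inter]
  simp_rw [h1]
  have h2 : ∑ x : Fin n → Fin k, ∏ j : Fin n, (if j ∈ S then h (x j) else 1)
      = ∏ j : Fin n, ∑ a : Fin k, (if j ∈ S then h a else 1) := by
    rw [Finset.prod_univ_sum]
    rw [← Fintype.piFinset_univ]
  rw [h2]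
  rw [← Finset.prod_mul_prod_compl S]
  have h3 : ∀ j ∈ S, (∑ a : Fin k, if j ∈ S then h a else 1) = ∑ a : Fin k, h a := by
    intro j hj; simp [hj]
  have h4 : ∀ j ∈ Sᶜ, (∑ a : Fin k, if j ∈ S then h a else 1) = (k : ℝ) := by
    intro j hj; simp at hj; simp [hj]
  rw [Finset.prod_congr rfl h3, Finset.prod_congr rfl h4, Finset.prod_const,
    Finset.prod_const, Finset.card_compl, Fintype.card_fin]

/-- For `x` uniform in `[k]^n` and a `p`-subset `S` of `[n]`,
`E[f(x_S)²] = ((k−1)^p + (−1)^p (k−1)) / k^{2p−1}`. -/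
theorem stmt10 (k p n : ℕ) (hk : 2 ≤ k) (hp : 2 ≤ p) (hn : p ≤ n)
    (S : Finset (Fin n)) (hS : S.card = p) :
    (∑ x : Fin n → Fin k, (fSet k n S x) ^ 2) / (k : ℝ) ^ n
      = (((k : ℝ) - 1) ^ p + (-1 : ℝ) ^ p * ((k : ℝ) - 1)) / (k : ℝ) ^ (2 * p - 1) := by
  have : NeZero k := ⟨by omega⟩
  have hk0 : (k : ℝ) ≠ 0 := by positivity
  have hk1 : (1 : ℝ) ≤ (k : ℝ) := by exact_mod_cast Nat.one_le_of_lt hk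
  -- pair correlation
  have corr : ∀ i i' : Fin k,
      (∑ a : Fin k, (((if a = i then (1:ℝ) else 0) - 1/k) * ((if a = i' then (1:ℝ) else 0) - 1/k)))
        = (if i = i' then (1:ℝ) else 0) - 1/k := by
    intro i i'
    have expand : ∀ a : Fin k,
        (((if a = i then (1:ℝ) else 0) - 1/k) * ((if a = i' then (1:ℝ) else 0) - 1/k))
        = (if a = i then (1:ℝ) else 0) * (if a = i' then (1:ℝ) else 0)
          - (1/k) * (if a = i then (1:ℝ) else 0)
          - (1/k) * (if a = i' then (1:ℝ) else 0) + (1/k)^2 := by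
      intro a; ring
    simp_rw [expand]
    rw [Finset.sum_add_distrib, Finset.sum_sub_distrib, Finset.sum_sub_distrib,
      ← Finset.mul_sum, ← Finset.mul_sum]
    have e1 : (∑ a : Fin k, (if a = i then (1:ℝ) else 0) * (if a = i' then (1:ℝ) else 0))
        = if i = i' then (1:ℝ) else 0 := by
      simp_rw [ite_mul, one_mul, zero_mul]
      by_cases h : i = i'
      · subst h; simp
      · rw [if_neg h]
        apply Finset.sum_eq_zero
        intro a _
        by_cases ha : a = i
        · subst ha; simp [h]
        · simp [ha]
    have e2 : (∑ a : Fin k, (if a = i then (1:ℝ) else 0)) = 1 := by simp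
    have e3 : (∑ a : Fin k, (if a = i' then (1:ℝ) else 0)) = 1 := by simp
    rw [e1, e2, e3, Finset.sum_const, Finset.card_univ, Fintype.card_fin]
    field_simp
    ring_nf
    rw [← mul_pow, mul_inv_cancel₀ hk0, one_pow]
    ring
  -- expand the square
  have sq : ∀ x : Fin n → Fin k, (fSet k n S x) ^ 2
      = ∑ i : Fin k, ∑ i' : Fin k,
          ∏ j ∈ S, (((if x j = i then (1:ℝ) else 0) - 1/k) * ((if x j = i' then (1:ℝ) else 0) - 1/k)) := by
    intro x
    rw [fSet, sq, Finset.sum_mul_sum]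
    congr 1; funext i; congr 1; funext i'
    rw [← Finset.prod_mul_distrib]
  simp_rw [sq]
  rw [Finset.sum_comm]
  have swap2 : ∀ i : Fin k,
      (∑ x : Fin n → Fin k, ∑ i' : Fin k, ∏ j ∈ S,
        (((if x j = i then (1:ℝ) else 0) - 1/k) * ((if x j = i' then (1:ℝ) else 0) - 1/k)))
      = ∑ i' : Fin k, ∑ x : Fin n → Fin k, ∏ j ∈ S,
        (((if x j = i then (1:ℝ) else 0) - 1/k) * ((if x j = i' then (1:ℝ) else 0) - 1/k)) := by
    intro i; rw [Finset.sum_comm]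
  simp_rw [swap2]
  have inner : ∀ i i' : Fin k,
      (∑ x : Fin n → Fin k, ∏ j ∈ S,
        (((if x j = i then (1:ℝ) else 0) - 1/k) * ((if x j = i' then (1:ℝ) else 0) - 1/k)))
      = ((if i = i' then (1:ℝ) else 0) - 1/k) ^ p * (k : ℝ) ^ (n - p) := by
    intro i i'
    rw [sum_prod_restrict k n S (fun a => ((if a = i then (1:ℝ) else 0) - 1/k) * ((if a = i' then (1:ℝ) else 0) - 1/k))]
    rw [corr i i', hS]
  simp_rw [inner]
  -- sum over i, i'
  have row : ∀ i : Fin k,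
      (∑ i' : Fin k, ((if i = i' then (1:ℝ) else 0) - 1/k) ^ p * (k : ℝ) ^ (n - p))
      = ((1 - 1/(k:ℝ)) ^ p + ((k:ℝ) - 1) * (-(1/(k:ℝ)))^p) * (k : ℝ) ^ (n - p) := by
    intro i
    have : ∀ i' : Fin k, ((if i = i' then (1:ℝ) else 0) - 1/k) ^ p * (k : ℝ) ^ (n - p)
        = (-(1/(k:ℝ)))^p * (k : ℝ) ^ (n - p)
          + (if i = i' then ((1 - 1/(k:ℝ)) ^ p - (-(1/(k:ℝ)))^p) * (k : ℝ) ^ (n - p) else 0) := by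
      intro i'
      by_cases h : i = i'
      · simp [h]; ring
      · simp [h]
    simp_rw [this]
    rw [Finset.sum_add_distrib, Finset.sum_const, Finset.sum_ite_eq, if_pos (Finset.mem_univ i),
      Finset.card_univ, Fintype.card_fin]
    ring
  simp_rw [row]
  rw [Finset.sum_const, Finset.card_univ, Fintype.card_fin, nsmul_eq_mul]
  -- final arithmetic
  have hsub : (1 : ℝ) - 1/(k:ℝ) = ((k:ℝ) - 1)/k := by field_simp
  have hneg : (-(1/(k:ℝ)))^p = (-1:ℝ)^p / (k:ℝ)^p := by
    rw [neg_div' , div_pow]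
  rw [hsub, hneg, div_pow]
  have hn' : (k:ℝ)^n = (k:ℝ)^(n-p) * (k:ℝ)^p := by
    rw [← pow_add]; congr 1; omega
  have h2p : (k:ℝ)^(2*p-1) * (k:ℝ) = (k:ℝ)^p * (k:ℝ)^p := by
    rw [← pow_succ, ← pow_add]; congr 1; omega
  have hkp : (k:ℝ)^p ≠ 0 := by positivity
  have hknp : (k:ℝ)^(n-p) ≠ 0 := by positivity
  have h2p1 : (k:ℝ)^(2*p-1) ≠ 0 := by positivity
  rw [hn']
  rw [show (k:ℝ)^(2*p-1) = (k:ℝ)^p * (k:ℝ)^p / k by rw [← h2p]; field_simp]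
  field_simp
end

section
/- Let A_1,…,A_r, B_1,…,B_r be p-subsets of [n] that are pairwise disjoint within each family (|A_u ∩ A_v| = |B_u ∩ B_v| = 0 for u ≠ v), with |A_u ∩ B_u| = s_u and Σ_u |A_u △ B_u| = p, and let C = ⊔_u (A_u △ B_u). Then for x uniform in [k]^n, E[ (Π_{u=1}^r f(x_{A_u}) f(x_{B_u})) · f(x_C) ] = k · Π_{u=1}^r g(s_u), where g(s) = a^{2p−s} + 2(k−1) a^{p−s} b^p + (k−1) a^s b^{2(p−s)} + (k−1)(k−2) b^{2p−s} with a = (k−1)/k² and b = −1/k². -/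
open Finset

/-- `g(s) = a^{2p−s} + 2(k−1)a^{p−s}b^p + (k−1)a^s b^{2(p−s)} + (k−1)(k−2)b^{2p−s}`
with `a = (k−1)/k²`, `b = −1/k²`. -/
noncomputable def gfun (k p s : ℕ) : ℝ :=
  (((k : ℝ) - 1) / (k : ℝ) ^ 2) ^ (2 * p - s)
    + 2 * ((k : ℝ) - 1) * (((k : ℝ) - 1) / (k : ℝ) ^ 2) ^ (p - s) * (-1 / (k : ℝ) ^ 2) ^ p
    + ((k : ℝ) - 1) * (((k : ℝ) - 1) / (k : ℝ) ^ 2) ^ s * (-1 / (k : ℝ) ^ 2) ^ (2 * (p - s))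
    + ((k : ℝ) - 1) * ((k : ℝ) - 2) * (-1 / (k : ℝ) ^ 2) ^ (2 * p - s)

noncomputable def phi (k : ℕ) (i v : Fin k) : ℝ := (if v = i then 1 else 0) - 1 / (k : ℝ)

noncomputable def ee (k : ℕ) (i₁ i₂ : Fin k) : ℝ := (∑ v : Fin k, phi k i₁ v * phi k i₂ v) / k

noncomputable def aa (k : ℕ) : ℝ := ((k:ℝ)-1)/(k:ℝ)^2
noncomputable def bb (k : ℕ) : ℝ := -1/(k:ℝ)^2

lemma ee_eq {k : ℕ} (hk : 2 ≤ k) (i₁ i₂ : Fin k) :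
    ee k i₁ i₂ = if i₁ = i₂ then aa k else bb k := by
  have hk0 : (k:ℝ) ≠ 0 := by
    have : 0 < k := by omega
    exact_mod_cast this.ne'
  have hexp : ∀ v : Fin k, phi k i₁ v * phi k i₂ v =
      (if v = i₁ then (1:ℝ) else 0) * (if v = i₂ then (1:ℝ) else 0)
        - (if v = i₁ then (1:ℝ) else 0) * (1/(k:ℝ)) - (if v = i₂ then (1:ℝ) else 0) * (1/(k:ℝ))
        + (1/(k:ℝ)) * (1/(k:ℝ)) := by
    intro v; simp only [phi]; ring
  have hind : ∀ v : Fin k, (if v = i₁ then (1:ℝ) else 0) * (if v = i₂ then (1:ℝ) else 0)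
      = if v = i₁ then (if i₁ = i₂ then (1:ℝ) else 0) else 0 := by
    intro v; split_ifs with h1 h2 h3 h4 <;> simp_all
  have hsum : (∑ v : Fin k, phi k i₁ v * phi k i₂ v)
      = (if i₁ = i₂ then (1:ℝ) else 0) - 1/(k:ℝ) := by
    simp only [hexp, hind]
    rw [Finset.sum_add_distrib, Finset.sum_sub_distrib, Finset.sum_sub_distrib,
      ← Finset.sum_mul, ← Finset.sum_mul]
    rw [Finset.sum_ite_eq' Finset.univ i₁, Finset.sum_ite_eq' Finset.univ i₁ (fun _ => (1:ℝ)),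
      Finset.sum_ite_eq' Finset.univ i₂ (fun _ => (1:ℝ))]
    simp only [Finset.mem_univ, if_true, Finset.sum_const, Finset.card_univ, Fintype.card_fin,
      nsmul_eq_mul]
    field_simp
    ring
  rw [ee, hsum, aa, bb]
  split_ifs <;> field_simp <;> try ring

lemma sum_ee_eq {k : ℕ} (hk : 2 ≤ k) (s t : ℕ) (i0 : Fin k) :
    ∑ q : Fin k × Fin k, ee k q.1 q.2 ^ s * ee k q.1 i0 ^ t * ee k q.2 i0 ^ t
      = gfun k (s + t) s := by
  have hcard1 : ((Finset.univ.erase i0).card : ℝ) = (k:ℝ) - 1 := by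
    rw [Finset.card_erase_of_mem (Finset.mem_univ i0), Finset.card_univ, Fintype.card_fin]
    have : 1 ≤ k := by omega
    push_cast [this]; ring
  have h1 : ∑ i2 : Fin k, ee k i0 i2 ^ s * ee k i0 i0 ^ t * ee k i2 i0 ^ t
      = aa k^(s+t+t) + ((k:ℝ)-1) * (bb k^s * aa k^t * bb k^t) := by
    rw [← Finset.sum_erase_add _ _ (Finset.mem_univ i0)]
    have hc : ∑ i2 ∈ Finset.univ.erase i0, ee k i0 i2 ^ s * ee k i0 i0 ^ t * ee k i2 i0 ^ t
        = (Finset.univ.erase i0).card • (bb k^s * aa k^t * bb k^t) := by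
      rw [Finset.sum_congr rfl (g := fun _ => bb k^s * aa k^t * bb k^t) ?_, Finset.sum_const]
      intro i2 hi2
      have hne : i2 ≠ i0 := Finset.ne_of_mem_erase hi2
      rw [ee_eq hk, ee_eq hk, ee_eq hk]
      simp [hne, Ne.symm hne]
    rw [hc, nsmul_eq_mul, hcard1]
    simp only [ee_eq hk, eq_self_iff_true, if_true]
    ring
  have h2 : ∀ i1 : Fin k, i1 ≠ i0 →
      ∑ i2 : Fin k, ee k i1 i2 ^ s * ee k i1 i0 ^ t * ee k i2 i0 ^ t
      = bb k^s * bb k^t * aa k^t + aa k^s * bb k^t * bb k^t + ((k:ℝ)-2) * (bb k^s * bb k^t * bb k^t) := by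
    intro i1 hne
    have hsub : ({i0, i1} : Finset (Fin k)) ⊆ Finset.univ := Finset.subset_univ _
    rw [← Finset.sum_sdiff hsub]
    have hc : ∑ i2 ∈ Finset.univ \ {i0, i1}, ee k i1 i2 ^ s * ee k i1 i0 ^ t * ee k i2 i0 ^ t
        = (Finset.univ \ {i0, i1}).card • (bb k^s * bb k^t * bb k^t) := by
      rw [Finset.sum_congr rfl (g := fun _ => bb k^s * bb k^t * bb k^t) ?_, Finset.sum_const]
      intro i2 hi2
      simp only [Finset.mem_sdiff, Finset.mem_insert, Finset.mem_singleton] at hi2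
      have h20 : i2 ≠ i0 := fun h => hi2.2 (Or.inl h)
      have h21 : i2 ≠ i1 := fun h => hi2.2 (Or.inr h)
      rw [ee_eq hk, ee_eq hk, ee_eq hk]
      simp [hne, h20, Ne.symm h21]
    have hcard2 : ((Finset.univ \ {i0, i1}).card : ℝ) = (k:ℝ) - 2 := by
      rw [Finset.card_sdiff_of_subset hsub, Finset.card_univ, Fintype.card_fin,
        Finset.card_insert_of_notMem (by simp [Ne.symm hne]), Finset.card_singleton]
      push_cast [hk]; ring
    have hpair : ∑ i2 ∈ ({i0, i1} : Finset (Fin k)), ee k i1 i2 ^ s * ee k i1 i0 ^ t * ee k i2 i0 ^ t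
        = bb k^s * bb k^t * aa k^t + aa k^s * bb k^t * bb k^t := by
      rw [Finset.sum_pair (Ne.symm hne)]
      simp only [ee_eq hk, eq_self_iff_true, if_true, if_neg hne]
      try ring
    rw [hc, hpair, nsmul_eq_mul, hcard2]
    ring
  rw [Fintype.sum_prod_type]
  rw [← Finset.sum_erase_add _ _ (Finset.mem_univ i0)]
  rw [Finset.sum_congr rfl (g := fun _ => bb k^s * bb k^t * aa k^t + aa k^s * bb k^t * bb k^t
      + ((k:ℝ)-2) * (bb k^s * bb k^t * bb k^t)) (fun i1 hi1 => h2 i1 (Finset.ne_of_mem_erase hi1)),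
    Finset.sum_const, h1, nsmul_eq_mul, hcard1]
  have e1 : 2 * (s + t) - s = s + (t + t) := by omega
  have e3 : 2 * ((s + t) - s) = t + t := by omega
  have e2 : (s + t) - s = t := by omega
  rw [gfun, e1, e3, e2]
  show _ = aa k ^ (s + (t+t)) + 2*((k:ℝ)-1) * aa k ^ t * bb k ^ (s+t)
      + ((k:ℝ)-1) * aa k ^ s * bb k ^ (t+t) + ((k:ℝ)-1)*((k:ℝ)-2) * bb k ^ (s+(t+t))
  simp only [pow_add]
  ring

lemma sum_pi_prod {n k : ℕ} (w : Fin n → Fin k → ℝ) :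
    ∑ x : Fin n → Fin k, ∏ j, w j (x j) = ∏ j, ∑ v, w j v := by
  rw [Finset.prod_univ_sum, Fintype.piFinset_univ]

lemma block_sum {k n r : ℕ} (hk : 2 ≤ k)
    (A B : Fin r → Finset (Fin n))
    (hAd : ∀ u v, u ≠ v → Disjoint (A u) (A v))
    (hBd : ∀ u v, u ≠ v → Disjoint (B u) (B v))
    (hABd : ∀ u v, u ≠ v → Disjoint (A u) (B v))
    (I : Fin r → Fin k × Fin k) (i0 : Fin k) :
    (∑ x : Fin n → Fin k,
      (∏ u, (∏ j ∈ A u, phi k (I u).1 (x j)) * (∏ j ∈ B u, phi k (I u).2 (x j)))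
        * ∏ j ∈ Finset.univ.biUnion (fun u => symmDiff (A u) (B u)), phi k i0 (x j)) / (k:ℝ)^n
    = ∏ u, ee k (I u).1 (I u).2 ^ (A u ∩ B u).card * ee k (I u).1 i0 ^ (A u \ B u).card
        * ee k (I u).2 i0 ^ (B u \ A u).card := by
  have hk0 : (k:ℝ) ≠ 0 := by
    have : 0 < k := by omega
    exact_mod_cast this.ne'
  set C := Finset.univ.biUnion (fun u => symmDiff (A u) (B u)) with hC
  set W : Fin n → Fin k → ℝ := fun j v =>
    (∏ u, (if j ∈ A u then phi k (I u).1 v else 1) * (if j ∈ B u then phi k (I u).2 v else 1)) *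
      (if j ∈ C then phi k i0 v else 1) with hWdef
  have hmem : ∀ (S : Finset (Fin n)) (f : Fin n → ℝ),
      ∏ j ∈ S, f j = ∏ j : Fin n, (if j ∈ S then f j else 1) := by
    intro S f; rw [Finset.prod_ite_mem, Finset.univ_inter]
  have hW : ∀ x : Fin n → Fin k,
      (∏ u, (∏ j ∈ A u, phi k (I u).1 (x j)) * (∏ j ∈ B u, phi k (I u).2 (x j)))
        * ∏ j ∈ C, phi k i0 (x j) = ∏ j : Fin n, W j (x j) := by
    intro x
    simp only [hWdef]
    rw [hmem C]
    rw [Finset.prod_congr rfl (g := fun u => ∏ j : Fin n,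
        ((if j ∈ A u then phi k (I u).1 (x j) else 1) * (if j ∈ B u then phi k (I u).2 (x j) else 1)))
      (fun u _ => by rw [hmem (A u), hmem (B u), ← Finset.prod_mul_distrib])]
    rw [Finset.prod_comm, ← Finset.prod_mul_distrib]
  simp only [hW]
  rw [sum_pi_prod]
  have hkn : (k:ℝ)^n = ∏ _j : Fin n, (k:ℝ) := by
    rw [Finset.prod_const, Finset.card_univ, Fintype.card_fin]
  rw [hkn, ← Finset.prod_div_distrib]
  -- now evaluate ∏ j, (∑ v, W j v) / k
  set D := Finset.univ.biUnion (fun u => A u ∪ B u) with hD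
  have hCD : C ⊆ D := by
    intro j hj
    simp only [hC, Finset.mem_biUnion] at hj
    obtain ⟨u, _, hju⟩ := hj
    rw [Finset.mem_symmDiff] at hju
    simp only [hD, Finset.mem_biUnion]
    exact ⟨u, Finset.mem_univ u, by rw [Finset.mem_union]; tauto⟩
  have hout : ∀ j ∉ D, (∑ v, W j v) / (k:ℝ) = 1 := by
    intro j hj
    have hnA : ∀ u, j ∉ A u := fun u hju => hj (by
      simp only [hD, Finset.mem_biUnion]; exact ⟨u, Finset.mem_univ u, Finset.mem_union_left _ hju⟩)
    have hnB : ∀ u, j ∉ B u := fun u hju => hj (by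
      simp only [hD, Finset.mem_biUnion]; exact ⟨u, Finset.mem_univ u, Finset.mem_union_right _ hju⟩)
    have hnC : j ∉ C := fun hjc => hj (hCD hjc)
    have : ∀ v, W j v = 1 := by
      intro v
      simp only [hWdef, if_neg (hnC), if_neg (hnA _), if_neg (hnB _), mul_one,
        Finset.prod_const_one, one_mul]
    simp only [this, Finset.sum_const, Finset.card_univ, Fintype.card_fin, nsmul_eq_mul, mul_one]
    field_simp
  rw [← Finset.prod_subset (Finset.subset_univ D) (fun j _ hj => hout j hj)]
  have hblockdis : ((Finset.univ : Finset (Fin r)) : Set (Fin r)).PairwiseDisjoint (fun u => A u ∪ B u) := by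
    intro u _ v _ huv
    simp only [Finset.disjoint_union_left, Finset.disjoint_union_right]
    exact ⟨⟨hAd u v huv, (hABd v u (Ne.symm huv)).symm⟩, ⟨hABd u v huv, hBd u v huv⟩⟩
  rw [hD, Finset.prod_biUnion hblockdis]
  refine Finset.prod_congr rfl (fun u _ => ?_)
  -- per-block evaluation
  have hjW : ∀ j ∈ A u ∪ B u, ∀ v, W j v =
      (if j ∈ A u then phi k (I u).1 v else 1) * (if j ∈ B u then phi k (I u).2 v else 1) *
        (if j ∈ symmDiff (A u) (B u) then phi k i0 v else 1) := by
    intro j hj v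
    have hother : ∀ u', u' ≠ u → j ∉ A u' ∧ j ∉ B u' := by
      intro u' hu'
      constructor
      · intro hja
        rcases Finset.mem_union.1 hj with h | h
        · simpa using (hAd u' u hu').le_bot (Finset.mem_inter.2 ⟨hja, h⟩)
        · simpa using (hABd u' u hu').le_bot (Finset.mem_inter.2 ⟨hja, h⟩)
      · intro hjb
        rcases Finset.mem_union.1 hj with h | h
        · simpa using (hABd u u' (Ne.symm hu')).le_bot (Finset.mem_inter.2 ⟨h, hjb⟩)
        · simpa using (hBd u' u hu').le_bot (Finset.mem_inter.2 ⟨hjb, h⟩)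
    have hCj : (j ∈ C) = (j ∈ symmDiff (A u) (B u)) := by
      simp only [hC, Finset.mem_biUnion]
      apply propext
      constructor
      · rintro ⟨u', -, hju'⟩
        rcases eq_or_ne u' u with rfl | hu'
        · exact hju'
        · rw [Finset.mem_symmDiff] at hju'
          rcases hju' with ⟨h, -⟩ | ⟨h, -⟩
          · exact absurd h (hother u' hu').1
          · exact absurd h (hother u' hu').2
      · intro h; exact ⟨u, Finset.mem_univ u, h⟩
    simp only [hWdef, hCj]
    congr 1
    rw [Finset.prod_eq_single u (fun u' _ hu' => by
      rw [if_neg (hother u' hu').1, if_neg (hother u' hu').2, one_mul])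
      (fun h => absurd (Finset.mem_univ u) h)]
  -- split the union
  have hsplit : A u ∪ B u = (A u ∩ B u) ∪ ((A u \ B u) ∪ (B u \ A u)) := by
    ext j
    simp only [Finset.mem_union, Finset.mem_inter, Finset.mem_sdiff]
    tauto
  have hdis1 : Disjoint (A u ∩ B u) ((A u \ B u) ∪ (B u \ A u)) := by
    rw [Finset.disjoint_left]
    intro a ha hb
    simp only [Finset.mem_inter, Finset.mem_union, Finset.mem_sdiff] at ha hb
    tauto
  have hdis2 : Disjoint (A u \ B u) (B u \ A u) := by
    rw [Finset.disjoint_left]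
    intro a ha hb
    simp only [Finset.mem_sdiff] at ha hb
    tauto
  rw [hsplit]
  rw [Finset.prod_union hdis1, Finset.prod_union hdis2]
  have c1 : ∀ j ∈ A u ∩ B u, (∑ v, W j v) / (k:ℝ) = ee k (I u).1 (I u).2 := by
    intro j hj
    rw [Finset.mem_inter] at hj
    have hjAB : j ∈ A u ∪ B u := Finset.mem_union_left _ hj.1
    have hjS : j ∉ symmDiff (A u) (B u) := by
      rw [Finset.mem_symmDiff]; push_neg; exact ⟨fun _ => hj.2, fun _ => hj.1⟩
    rw [ee]
    congr 1
    refine Finset.sum_congr rfl (fun v _ => ?_)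
    rw [hjW j hjAB v, if_pos hj.1, if_pos hj.2, if_neg hjS, mul_one]
  have c2 : ∀ j ∈ A u \ B u, (∑ v, W j v) / (k:ℝ) = ee k (I u).1 i0 := by
    intro j hj
    rw [Finset.mem_sdiff] at hj
    have hjAB : j ∈ A u ∪ B u := Finset.mem_union_left _ hj.1
    have hjS : j ∈ symmDiff (A u) (B u) := by
      rw [Finset.mem_symmDiff]; exact Or.inl ⟨hj.1, hj.2⟩
    rw [ee]
    congr 1
    refine Finset.sum_congr rfl (fun v _ => ?_)
    rw [hjW j hjAB v, if_pos hj.1, if_neg hj.2, if_pos hjS, mul_one]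
  have c3 : ∀ j ∈ B u \ A u, (∑ v, W j v) / (k:ℝ) = ee k (I u).2 i0 := by
    intro j hj
    rw [Finset.mem_sdiff] at hj
    have hjAB : j ∈ A u ∪ B u := Finset.mem_union_right _ hj.1
    have hjS : j ∈ symmDiff (A u) (B u) := by
      rw [Finset.mem_symmDiff]; exact Or.inr ⟨hj.1, hj.2⟩
    rw [ee]
    congr 1
    refine Finset.sum_congr rfl (fun v _ => ?_)
    rw [hjW j hjAB v, if_neg hj.2, if_pos hj.1, if_pos hjS, one_mul]
  rw [Finset.prod_congr rfl c1, Finset.prod_congr rfl c2, Finset.prod_congr rfl c3,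
    Finset.prod_const, Finset.prod_const, Finset.prod_const]
  ring

/-- Moment computation for products of `f` over blocks:
`E_x[(∏_u f(x_{A_u}) f(x_{B_u})) f(x_C)] = k ∏_u g(s_u)` where
`C = ⊔_u (A_u △ B_u)`. -/
theorem stmt12 (k p n r : ℕ) (hk : 2 ≤ k) (hp : 2 ≤ p)
    (A B : Fin r → Finset (Fin n)) (s : Fin r → ℕ)
    (hA : ∀ u, (A u).card = p) (hB : ∀ u, (B u).card = p)
    (hAd : ∀ u v, u ≠ v → Disjoint (A u) (A v))
    (hBd : ∀ u v, u ≠ v → Disjoint (B u) (B v))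
    (hABd : ∀ u v, u ≠ v → Disjoint (A u) (B v))
    (hs : ∀ u, (A u ∩ B u).card = s u)
    (hsum : ∑ u : Fin r, (symmDiff (A u) (B u)).card = p) :
    (∑ x : Fin n → Fin k,
        (∏ u : Fin r, fSet k n (A u) x * fSet k n (B u) x) *
          fSet k n (Finset.univ.biUnion fun u => symmDiff (A u) (B u)) x) / (k : ℝ) ^ n
      = (k : ℝ) * ∏ u : Fin r, gfun k p (s u) := by
  have hsle : ∀ u, s u ≤ p := by
    intro u
    rw [← hs u, ← hA u]
    exact Finset.card_le_card Finset.inter_subset_left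
  have hcA : ∀ u, (A u \ B u).card = p - s u := by
    intro u
    have h1 := Finset.card_sdiff_add_card_inter (A u) (B u)
    have h2 := hs u; have h3 := hA u
    omega
  have hcB : ∀ u, (B u \ A u).card = p - s u := by
    intro u
    have h1 := Finset.card_sdiff_add_card_inter (B u) (A u)
    rw [Finset.inter_comm] at h1
    have h2 := hs u; have h3 := hB u
    omega
  have hf : ∀ (S : Finset (Fin n)) (x : Fin n → Fin k),
      fSet k n S x = ∑ i : Fin k, ∏ j ∈ S, phi k i (x j) := fun S x => rfl
  set C := Finset.univ.biUnion fun u => symmDiff (A u) (B u) with hC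
  have hstep : ∀ x : Fin n → Fin k,
      (∏ u : Fin r, fSet k n (A u) x * fSet k n (B u) x) * fSet k n C x
      = ∑ I : Fin r → Fin k × Fin k, ∑ i0 : Fin k,
          (∏ u, (∏ j ∈ A u, phi k (I u).1 (x j)) * (∏ j ∈ B u, phi k (I u).2 (x j)))
            * ∏ j ∈ C, phi k i0 (x j) := by
    intro x
    have h1 : ∀ u : Fin r, fSet k n (A u) x * fSet k n (B u) x
        = ∑ q : Fin k × Fin k, (∏ j ∈ A u, phi k q.1 (x j)) * (∏ j ∈ B u, phi k q.2 (x j)) := by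
      intro u
      rw [hf, hf, Finset.sum_mul_sum, ← Fintype.sum_prod_type']
    rw [Finset.prod_congr rfl (fun u _ => h1 u), Finset.prod_univ_sum, Fintype.piFinset_univ,
      hf, Finset.sum_mul_sum]
  simp only [hstep]
  have hswap : ∑ x : Fin n → Fin k, ∑ I : Fin r → Fin k × Fin k, ∑ i0 : Fin k,
        (∏ u, (∏ j ∈ A u, phi k (I u).1 (x j)) * (∏ j ∈ B u, phi k (I u).2 (x j)))
          * ∏ j ∈ C, phi k i0 (x j)
      = ∑ I : Fin r → Fin k × Fin k, ∑ i0 : Fin k, ∑ x : Fin n → Fin k,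
        (∏ u, (∏ j ∈ A u, phi k (I u).1 (x j)) * (∏ j ∈ B u, phi k (I u).2 (x j)))
          * ∏ j ∈ C, phi k i0 (x j) := by
    rw [Finset.sum_comm]
    exact Finset.sum_congr rfl (fun I _ => Finset.sum_comm)
  rw [hswap, Finset.sum_div]
  have hblocks : ∀ I : Fin r → Fin k × Fin k, ∀ i0 : Fin k,
      (∑ x : Fin n → Fin k,
        (∏ u, (∏ j ∈ A u, phi k (I u).1 (x j)) * (∏ j ∈ B u, phi k (I u).2 (x j)))
          * ∏ j ∈ C, phi k i0 (x j)) / (k:ℝ)^n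
      = ∏ u, ee k (I u).1 (I u).2 ^ (s u) * ee k (I u).1 i0 ^ (p - s u)
          * ee k (I u).2 i0 ^ (p - s u) := by
    intro I i0
    rw [hC, block_sum hk A B hAd hBd hABd I i0]
    exact Finset.prod_congr rfl (fun u _ => by rw [hs u, hcA u, hcB u])
  calc ∑ I : Fin r → Fin k × Fin k, (∑ i0 : Fin k, ∑ x : Fin n → Fin k,
        (∏ u, (∏ j ∈ A u, phi k (I u).1 (x j)) * (∏ j ∈ B u, phi k (I u).2 (x j)))
          * ∏ j ∈ C, phi k i0 (x j)) / (k:ℝ)^n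
      = ∑ I : Fin r → Fin k × Fin k, ∑ i0 : Fin k,
          ∏ u, ee k (I u).1 (I u).2 ^ (s u) * ee k (I u).1 i0 ^ (p - s u)
            * ee k (I u).2 i0 ^ (p - s u) := by
        refine Finset.sum_congr rfl (fun I _ => ?_)
        rw [Finset.sum_div]
        exact Finset.sum_congr rfl (fun i0 _ => hblocks I i0)
    _ = ∑ i0 : Fin k, ∑ I : Fin r → Fin k × Fin k,
          ∏ u, ee k (I u).1 (I u).2 ^ (s u) * ee k (I u).1 i0 ^ (p - s u)
            * ee k (I u).2 i0 ^ (p - s u) := Finset.sum_comm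
    _ = ∑ i0 : Fin k, ∏ u : Fin r, ∑ q : Fin k × Fin k,
          ee k q.1 q.2 ^ (s u) * ee k q.1 i0 ^ (p - s u) * ee k q.2 i0 ^ (p - s u) := by
        refine Finset.sum_congr rfl (fun i0 _ => ?_)
        rw [Finset.prod_univ_sum, Fintype.piFinset_univ]
    _ = ∑ i0 : Fin k, ∏ u : Fin r, gfun k p (s u) := by
        refine Finset.sum_congr rfl (fun i0 _ => Finset.prod_congr rfl (fun u _ => ?_))
        rw [sum_ee_eq hk (s u) (p - s u) i0, Nat.add_sub_cancel' (hsle u)]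
    _ = (k : ℝ) * ∏ u : Fin r, gfun k p (s u) := by
        rw [Finset.sum_const, Finset.card_univ, Fintype.card_fin, nsmul_eq_mul]
end

section
/- Let C, C' be drawn uniformly and independently from C_λ (tuples of λ pairwise-disjoint p-subsets of [n]), and let r(C, C') be the number of elements of [n] contained in both ⋃_i C_i and ⋃_i C'_i. Then the number of pairs with r(C,C') = r is at most |C_λ|² · C(λp, r) · (λp/n)^r. -/
open Finset

/-- The set of ordered tuples of `λ` pairwise-disjoint `p`-subsets of `[n]`. -/
def CSet (n p lam : ℕ) : Set (Fin lam → Finset (Fin n)) :=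
  {t | (∀ i, (t i).card = p) ∧ ∀ i j, i ≠ j → Disjoint (t i) (t j)}

private lemma descFact_mul_pow_le {a b : ℕ} (h : a ≤ b) :
    ∀ r : ℕ, a.descFactorial r * b ^ r ≤ b.descFactorial r * a ^ r := by
  intro r
  induction r with
  | zero => simp
  | succ r ih =>
    have key : (a - r) * b ≤ (b - r) * a := by
      rcases Nat.le_total r a with hra | har
      · have hr : r * a ≤ r * b := Nat.mul_le_mul_left r h
        calc (a - r) * b = a * b - r * b := by rw [Nat.sub_mul]
          _ ≤ a * b - r * a := Nat.sub_le_sub_left hr (a * b)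
          _ = b * a - r * a := by rw [Nat.mul_comm a b]
          _ = (b - r) * a := (Nat.sub_mul b r a).symm
      · simp [Nat.sub_eq_zero_of_le har]
    calc a.descFactorial (r + 1) * b ^ (r + 1)
        = ((a - r) * b) * (a.descFactorial r * b ^ r) := by
          rw [Nat.descFactorial_succ, pow_succ]; ring
      _ ≤ ((b - r) * a) * (b.descFactorial r * a ^ r) := Nat.mul_le_mul key ih
      _ = b.descFactorial (r + 1) * a ^ (r + 1) := by
          rw [Nat.descFactorial_succ, pow_succ]; ring

private lemma choose_mul_pow_le {a b : ℕ} (h : a ≤ b) (r : ℕ) :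
    a.choose r * b ^ r ≤ b.choose r * a ^ r := by
  have h2 : Nat.factorial r * (a.choose r * b ^ r) ≤ Nat.factorial r * (b.choose r * a ^ r) := by
    calc Nat.factorial r * (a.choose r * b ^ r) = a.descFactorial r * b ^ r := by
          rw [Nat.descFactorial_eq_factorial_mul_choose]; ring
      _ ≤ b.descFactorial r * a ^ r := descFact_mul_pow_le h r
      _ = Nat.factorial r * (b.choose r * a ^ r) := by
          rw [Nat.descFactorial_eq_factorial_mul_choose]; ring
  exact Nat.le_of_mul_le_mul_left h2 (Nat.factorial_pos r)

/-- The finset version of `CSet`. -/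
private def CFin (n p lam : ℕ) : Finset (Fin lam → Finset (Fin n)) :=
  Finset.univ.filter
    (fun t => (∀ i, (t i).card = p) ∧ ∀ i j, i ≠ j → Disjoint (t i) (t j))

private lemma mem_CFin {n p lam : ℕ} (t : Fin lam → Finset (Fin n)) :
    t ∈ CFin n p lam ↔ t ∈ CSet n p lam := by
  simp [CFin, CSet]

/-- The support of a tuple. -/
private def Ssup {n lam : ℕ} (t : Fin lam → Finset (Fin n)) : Finset (Fin n) :=
  Finset.univ.biUnion t

private lemma Ssup_card {n p lam : ℕ} {t : Fin lam → Finset (Fin n)}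
    (ht : t ∈ CFin n p lam) : (Ssup t).card = lam * p := by
  rw [mem_CFin] at ht
  obtain ⟨h1, h2⟩ := ht
  rw [Ssup, Finset.card_biUnion (fun i _ j _ hij => h2 i j hij)]
  simp [h1, Finset.card_univ, Nat.mul_comm]

/-- Applying a permutation to a tuple preserves membership in `CFin`. -/
private lemma CFin_image {n p lam : ℕ} (τ : Equiv.Perm (Fin n))
    {t : Fin lam → Finset (Fin n)} (ht : t ∈ CFin n p lam) :
    (fun i => (t i).image τ) ∈ CFin n p lam := by
  rw [mem_CFin] at ht ⊢
  obtain ⟨h1, h2⟩ := ht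
  constructor
  · intro i
    rw [Finset.card_image_of_injective _ τ.injective]
    exact h1 i
  · intro i j hij
    exact (Finset.disjoint_image τ.injective).mpr (h2 i j hij)

private lemma Ssup_image {n lam : ℕ} (τ : Equiv.Perm (Fin n))
    (t : Fin lam → Finset (Fin n)) :
    Ssup (fun i => (t i).image τ) = (Ssup t).image τ := by
  rw [Ssup, Ssup, Finset.biUnion_image]

/-- Symmetry: the number of tuples whose support contains `R` only depends on `|R|`. -/
private lemma count_contains_eq {n p lam : ℕ} {R R' : Finset (Fin n)}
    (hRR' : R.card = R'.card) :
    ((CFin n p lam).filter fun C => R ⊆ Ssup C).card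
      = ((CFin n p lam).filter fun C => R' ⊆ Ssup C).card := by
  classical
  have hcard : Fintype.card R = Fintype.card R' := by
    simpa [Fintype.card_coe] using hRR'
  let e : {x // x ∈ R} ≃ {x // x ∈ R'} := Fintype.equivOfCardEq hcard
  let σ : Equiv.Perm (Fin n) := e.extendSubtype
  have hmem : ∀ x, x ∈ R ↔ σ x ∈ R' := by
    intro x
    constructor
    · intro hx; exact e.extendSubtype_mem x hx
    · intro hx
      by_contra hxR
      exact (e.extendSubtype_not_mem x hxR) hx
  have himg : R.image σ = R' := by
    apply Finset.eq_of_subset_of_card_le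
    · intro y hy
      obtain ⟨x, hx, rfl⟩ := Finset.mem_image.mp hy
      exact (hmem x).mp hx
    · rw [Finset.card_image_of_injective _ σ.injective, hRR']
  have himg' : R'.image σ.symm = R := by
    rw [← himg, Finset.image_image]
    simp [Finset.image_image]
  apply Finset.card_nbij' (fun C => fun i => (C i).image σ)
      (fun C => fun i => (C i).image σ.symm)
  · intro C hC
    rw [Finset.mem_coe, Finset.mem_filter] at hC ⊢
    refine ⟨CFin_image σ hC.1, ?_⟩
    rw [Ssup_image, ← himg]
    exact Finset.image_subset_image hC.2
  · intro C hC
    rw [Finset.mem_coe, Finset.mem_filter] at hC ⊢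
    refine ⟨CFin_image σ.symm hC.1, ?_⟩
    rw [Ssup_image, ← himg']
    exact Finset.image_subset_image hC.2
  · intro C _
    funext i
    dsimp only
    rw [Finset.image_image]
    simp
  · intro C _
    funext i
    dsimp only
    rw [Finset.image_image]
    simp

/-- Double counting: summing the counts over all `R` of size `r`. -/
private lemma sum_count_eq {n p lam r : ℕ} :
    ∑ R ∈ Finset.powersetCard r (Finset.univ : Finset (Fin n)),
        ((CFin n p lam).filter fun C => R ⊆ Ssup C).card
      = (CFin n p lam).card * (lam * p).choose r := by
  classical
  have step1 : ∀ R : Finset (Fin n),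
      ((CFin n p lam).filter fun C => R ⊆ Ssup C).card
        = ∑ C ∈ CFin n p lam, if R ⊆ Ssup C then 1 else 0 :=
    fun R => Finset.card_filter _ _
  rw [Finset.sum_congr rfl (fun R _ => step1 R), Finset.sum_comm]
  rw [Finset.sum_congr rfl (fun C hC => ?_)]
  · rw [Finset.sum_const, smul_eq_mul]
  · calc ∑ R ∈ Finset.powersetCard r (Finset.univ : Finset (Fin n)),
          (if R ⊆ Ssup C then 1 else 0)
        = ((Finset.powersetCard r (Finset.univ : Finset (Fin n))).filter
            (fun R => R ⊆ Ssup C)).card := (Finset.card_filter _ _).symm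
      _ = (Finset.powersetCard r (Ssup C)).card := by
          congr 1
          ext R
          simp only [Finset.mem_filter, Finset.mem_powersetCard]
          constructor
          · rintro ⟨⟨-, hc⟩, hsub⟩; exact ⟨hsub, hc⟩
          · rintro ⟨hsub, hc⟩; exact ⟨⟨Finset.subset_univ R, hc⟩, hsub⟩
      _ = (lam * p).choose r := by
          rw [Finset.card_powersetCard, Ssup_card hC]

/-- The number of pairs `(C, C') ∈ C_λ²` whose supports overlap in exactly `r`
elements is at most `|C_λ|² · C(λp, r) · (λp/n)^r`. -/
theorem stmt14 (p lam n r : ℕ) (hp : 2 ≤ p) (hlam : 1 ≤ lam) (hln : lam * p ≤ n) :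
    (Nat.card {tt : (Fin lam → Finset (Fin n)) × (Fin lam → Finset (Fin n)) //
          tt.1 ∈ CSet n p lam ∧ tt.2 ∈ CSet n p lam ∧
          ((Finset.univ.biUnion tt.1) ∩ (Finset.univ.biUnion tt.2)).card = r} : ℝ)
      ≤ (Nat.card (CSet n p lam) : ℝ) ^ 2 * (Nat.choose (lam * p) r : ℝ) *
          ((lam * p : ℝ) / (n : ℝ)) ^ r := by
  classical
  set CF := CFin n p lam with hCFdef
  set P : Finset ((Fin lam → Finset (Fin n)) × (Fin lam → Finset (Fin n))) :=
    (CF ×ˢ CF).filter (fun tt => (Ssup tt.1 ∩ Ssup tt.2).card = r) with hPdef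
  have hNcard : Nat.card (CSet n p lam) = CF.card := by
    rw [Nat.card_congr (Equiv.subtypeEquivRight (fun x => (mem_CFin x).symm)),
      Nat.card_eq_fintype_card, Fintype.card_coe]
  have hPcard : Nat.card {tt : (Fin lam → Finset (Fin n)) × (Fin lam → Finset (Fin n)) //
      tt.1 ∈ CSet n p lam ∧ tt.2 ∈ CSet n p lam ∧
      ((Finset.univ.biUnion tt.1) ∩ (Finset.univ.biUnion tt.2)).card = r} = P.card := by
    have hiff : ∀ tt : (Fin lam → Finset (Fin n)) × (Fin lam → Finset (Fin n)),
        (tt.1 ∈ CSet n p lam ∧ tt.2 ∈ CSet n p lam ∧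
          ((Finset.univ.biUnion tt.1) ∩ (Finset.univ.biUnion tt.2)).card = r) ↔ tt ∈ P := by
      intro tt
      rw [hPdef, Finset.mem_filter, Finset.mem_product, mem_CFin, mem_CFin]
      change _ ↔ (_ ∧ _) ∧ _
      rw [Ssup, Ssup]
      tauto
    rw [Nat.card_congr (Equiv.subtypeEquivRight hiff), Nat.card_eq_fintype_card,
      Fintype.card_coe]
  rw [hNcard, hPcard]
  by_cases hr : r ≤ lam * p
  · -- main case
    have hrn : r ≤ n := hr.trans hln
    have hn0 : 0 < n := lt_of_lt_of_le (by nlinarith) hln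
    -- fix a reference set R₀ of size r
    obtain ⟨R₀, -, hR₀card⟩ :=
      Finset.exists_subset_card_eq (show r ≤ (Finset.univ : Finset (Fin n)).card by
        simpa using hrn)
    set fval := ((CFin n p lam).filter fun C => R₀ ⊆ Ssup C).card with hfval
    have hconst : ∀ R : Finset (Fin n), R.card = r →
        ((CFin n p lam).filter fun C => R ⊆ Ssup C).card = fval := by
      intro R hR
      exact count_contains_eq (hR.trans hR₀card.symm)
    -- key2 : fval * C(n,r) = N * C(λp, r)
    have key2 : n.choose r * fval = CF.card * (lam * p).choose r := by
      have := sum_count_eq (n := n) (p := p) (lam := lam) (r := r)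
      rw [Finset.sum_congr rfl (fun R hR => hconst R
        (Finset.mem_powersetCard.mp hR).2)] at this
      rw [Finset.sum_const, smul_eq_mul, Finset.card_powersetCard] at this
      simpa using this
    -- key1 : P.card ≤ N * (C(λp,r) * fval)
    have key1 : P.card ≤ CF.card * ((lam * p).choose r * fval) := by
      have hinj : P.card ≤ (CF.sigma (fun C => (Finset.powersetCard r (Ssup C)).sigma
          (fun R => (CFin n p lam).filter fun C' => R ⊆ Ssup C'))).card := by
        apply Finset.card_le_card_of_injOn
          (fun tt => ⟨tt.1, Ssup tt.1 ∩ Ssup tt.2, tt.2⟩)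
        · intro tt htt
          rw [hPdef, Finset.mem_coe, Finset.mem_filter, Finset.mem_product] at htt
          obtain ⟨⟨h1, h2⟩, h3⟩ := htt
          rw [Finset.mem_coe, Finset.mem_sigma, Finset.mem_sigma, Finset.mem_powersetCard,
            Finset.mem_filter]
          exact ⟨h1, ⟨Finset.inter_subset_left, h3⟩, h2, Finset.inter_subset_right⟩
        · intro tt _ tt' _ heq
          have h1 : tt.1 = tt'.1 := congrArg Sigma.fst heq
          have h2 : tt.2 = tt'.2 := congrArg (fun x => x.snd.snd) heq
          exact Prod.ext h1 h2
      rw [Finset.card_sigma] at hinj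
      refine hinj.trans ?_
      rw [← hCFdef]
      apply le_of_eq
      rw [Finset.sum_congr rfl (fun C hC => ?_), Finset.sum_const, smul_eq_mul]
      rw [Finset.card_sigma,
        Finset.sum_congr rfl (fun R hR => hconst R (Finset.mem_powersetCard.mp hR).2),
        Finset.sum_const, smul_eq_mul, Finset.card_powersetCard, Ssup_card]
      rw [hCFdef] at hC
      exact hC
    -- key3
    have key3 : (lam * p).choose r * n ^ r ≤ n.choose r * (lam * p) ^ r :=
      choose_mul_pow_le hln r
    have hchoosepos : 0 < n.choose r := Nat.choose_pos hrn
    -- the final natural-number inequality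
    have natineq : P.card * n ^ r ≤ CF.card ^ 2 * (lam * p).choose r * (lam * p) ^ r := by
      have hmul : (P.card * n ^ r) * n.choose r
          ≤ (CF.card ^ 2 * (lam * p).choose r * (lam * p) ^ r) * n.choose r := by
        calc (P.card * n ^ r) * n.choose r
            ≤ (CF.card * ((lam * p).choose r * fval) * n ^ r) * n.choose r := by
              exact Nat.mul_le_mul_right _ (Nat.mul_le_mul_right _ key1)
          _ = CF.card * (lam * p).choose r * (n.choose r * fval) * n ^ r := by ring
          _ = CF.card * (lam * p).choose r * (CF.card * (lam * p).choose r) * n ^ r := by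
              rw [key2]
          _ = CF.card ^ 2 * (lam * p).choose r * ((lam * p).choose r * n ^ r) := by ring
          _ ≤ CF.card ^ 2 * (lam * p).choose r * (n.choose r * (lam * p) ^ r) :=
              Nat.mul_le_mul_left _ key3
          _ = (CF.card ^ 2 * (lam * p).choose r * (lam * p) ^ r) * n.choose r := by ring
      exact Nat.le_of_mul_le_mul_right hmul hchoosepos
    have hnR : (0 : ℝ) < (n : ℝ) ^ r := by positivity
    rw [div_pow, ← mul_div_assoc, le_div_iff₀ hnR]
    calc (P.card : ℝ) * (n : ℝ) ^ r
        ≤ (CF.card : ℝ) ^ 2 * ((lam * p).choose r : ℝ) * ((lam * p : ℕ) : ℝ) ^ r := by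
          exact_mod_cast natineq
      _ = (CF.card : ℝ) ^ 2 * ((lam * p).choose r : ℝ) * ((lam : ℝ) * (p : ℝ)) ^ r := by
          push_cast; ring
  · -- r > lam * p : the left side is zero
    have hP0 : P = ∅ := by
      rw [Finset.eq_empty_iff_forall_notMem]
      intro tt htt
      rw [hPdef, Finset.mem_filter, Finset.mem_product] at htt
      obtain ⟨⟨h1, -⟩, h3⟩ := htt
      apply hr
      calc r = (Ssup tt.1 ∩ Ssup tt.2).card := h3.symm
        _ ≤ (Ssup tt.1).card := Finset.card_le_card Finset.inter_subset_left
        _ = lam * p := Ssup_card h1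
    rw [hP0]
    simp only [Finset.card_empty, Nat.cast_zero]
    positivity
end

section
/- Suppose identically distributed independent real random variables (A_S) satisfy, after a further averaging over a latent variable x: E_x E[A_S] = 0, E_x (E[A_S])² = β²μ, E_x E[A_S²] = 1, and the covariance structure of Lemma on product covariances. Then for the covariance W(a,b) = Cov(Π_{i≤a} A_{S_i} Π_{j≤b} A_{S'_j}, Π_{i≤a} A_{S_i} Π_{j≤b} A_{S''_j}) over distinct index sets with a + b = λ, we have E_x W(a,b) = 0 when b ≥ 1, and E_x W(λ, 0) = 1 − (β²μ)^λ. -/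
open Finset

lemma key_factor {ι X : Type*} [Fintype ι] [DecidableEq ι] [Fintype X]
    {κ : Type*} [Fintype κ] (T : κ → ι) (hT : Function.Injective T)
    (f : κ → X → ℝ) :
    ∑ x : ι → X, ∏ k, f k (x (T k)) =
      (∏ k, ∑ v : X, f k v) * (Fintype.card X : ℝ) ^ (Fintype.card ι - Fintype.card κ) := by
  classical
  set G : ι → X → ℝ := Function.extend T f (fun _ _ => 1) with hGdef
  have hGT : ∀ k, G (T k) = f k := fun k => hT.extend_apply f _ k
  have hGn : ∀ i ∉ Finset.univ.image T, G i = fun _ => (1:ℝ) := by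
    intro i hi
    apply Function.extend_apply'
    rintro ⟨k, rfl⟩
    exact hi (mem_image_of_mem _ (mem_univ k))
  have h1 : ∀ x : ι → X, ∏ k, f k (x (T k)) = ∏ i : ι, G i (x i) := by
    intro x
    calc ∏ k, f k (x (T k)) = ∏ k, G (T k) (x (T k)) :=
          Finset.prod_congr rfl fun k _ => (congrFun (hGT k) _).symm
      _ = ∏ i ∈ Finset.univ.image T, G i (x i) :=
          (Finset.prod_image (g := T) (f := fun i => G i (x i)) (fun k _ k' _ h => hT h)).symm
      _ = ∏ i : ι, G i (x i) :=
          Finset.prod_subset (subset_univ _) (fun i _ hi => by rw [hGn i hi])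
  have h2 : ∑ x : ι → X, ∏ i : ι, G i (x i) = ∏ i : ι, ∑ v : X, G i v := by
    rw [Finset.prod_univ_sum, Fintype.piFinset_univ]
  simp only [h1, h2]
  rw [← Finset.prod_mul_prod_compl (Finset.univ.image T) (fun i => ∑ v : X, G i v)]
  congr 1
  · rw [Finset.prod_image (g := T) (f := fun i => ∑ v : X, G i v) (fun k _ k' _ h => hT h)]
    exact Finset.prod_congr rfl fun k _ => by rw [hGT k]
  · have hc : ∀ i ∈ (Finset.univ.image T)ᶜ, (∑ v : X, G i v) = (Fintype.card X : ℝ) := by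
      intro i hi
      rw [hGn i (Finset.mem_compl.mp hi)]
      simp
    rw [Finset.prod_congr rfl hc, Finset.prod_const, Finset.card_compl,
      Finset.card_image_of_injective _ hT, Finset.card_univ]

/-- Expectation over the latent variable of the covariance `W(a,b)`:
conditional on `x`, the variables are independent with conditional means `m (x S)`
and conditional second moments `q (x S)`; under the moment dictionary
`E_x m = 0`, `E_x m² = β²μ`, `E_x q = 1`, the covariance
`W(a,b) = (∏_j m(x_{S'_j}) m(x_{S''_j})) (∏_i q(x_{S_i}) − ∏_i m(x_{S_i})²)`
satisfies `E_x W(a,b) = 0` when `b ≥ 1`, and `E_x W(λ,0) = 1 − (β²μ)^λ`. -/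
theorem stmt19 {ι X : Type*} [Fintype ι] [DecidableEq ι] [Fintype X] [Nonempty X]
    (m q : X → ℝ) (β μpar : ℝ) (hβ : 0 < β) (hμ : 0 < μpar)
    (hm : (∑ v : X, m v) / (Fintype.card X : ℝ) = 0)
    (hm2 : (∑ v : X, (m v) ^ 2) / (Fintype.card X : ℝ) = β ^ 2 * μpar)
    (hq : (∑ v : X, q v) / (Fintype.card X : ℝ) = 1)
    (lam a b : ℕ) (hab : a + b = lam)
    (S : Fin a → ι) (S' S'' : Fin b → ι)
    (hinj : Function.Injective
      (Sum.elim S (Sum.elim S' S'') : Fin a ⊕ (Fin b ⊕ Fin b) → ι)) :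
    (1 ≤ b →
      (∑ x : ι → X, (∏ j : Fin b, m (x (S' j)) * m (x (S'' j))) *
          ((∏ i : Fin a, q (x (S i))) - ∏ i : Fin a, (m (x (S i))) ^ 2))
        / (Fintype.card X : ℝ) ^ (Fintype.card ι) = 0)
    ∧ (b = 0 →
      (∑ x : ι → X, (∏ j : Fin b, m (x (S' j)) * m (x (S'' j))) *
          ((∏ i : Fin a, q (x (S i))) - ∏ i : Fin a, (m (x (S i))) ^ 2))
        / (Fintype.card X : ℝ) ^ (Fintype.card ι) = 1 - (β ^ 2 * μpar) ^ lam) := by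
  classical
  have hcpos : (0:ℝ) < (Fintype.card X : ℝ) := by exact_mod_cast Fintype.card_pos
  have hcne : (Fintype.card X : ℝ) ≠ 0 := ne_of_gt hcpos
  have hmz : (∑ v : X, m v) = 0 := by
    field_simp at hm; simpa using hm
  have hm2' : (∑ v : X, (m v) ^ 2) = β ^ 2 * μpar * (Fintype.card X : ℝ) := by
    field_simp at hm2; linarith [hm2]
  have hq' : (∑ v : X, q v) = (Fintype.card X : ℝ) := by
    field_simp at hq; linarith [hq]
  set T : Fin a ⊕ (Fin b ⊕ Fin b) → ι := Sum.elim S (Sum.elim S' S'') with hT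
  have hcard : Fintype.card (Fin a ⊕ (Fin b ⊕ Fin b)) = a + (b + b) := by simp
  have hle : a + (b + b) ≤ Fintype.card ι := by
    have := Fintype.card_le_of_injective _ hinj
    rwa [hcard] at this
  set f1 : (Fin a ⊕ (Fin b ⊕ Fin b)) → X → ℝ :=
    Sum.elim (fun _ => q) (Sum.elim (fun _ => m) (fun _ => m)) with hf1
  set f2 : (Fin a ⊕ (Fin b ⊕ Fin b)) → X → ℝ :=
    Sum.elim (fun _ v => (m v) ^ 2) (Sum.elim (fun _ => m) (fun _ => m)) with hf2
  have key1 : ∑ x : ι → X, ∏ k, f1 k (x (T k)) =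
      (Fintype.card X : ℝ) ^ a * ((0:ℝ) ^ b * (0:ℝ) ^ b) *
        (Fintype.card X : ℝ) ^ (Fintype.card ι - (a + (b + b))) := by
    rw [key_factor T hinj f1, hcard]
    congr 1
    simp only [hf1, Fintype.prod_sum_type, Sum.elim_inl, Sum.elim_inr,
      Finset.prod_const, Finset.card_univ, Fintype.card_fin, hq', hmz]
  have key2 : ∑ x : ι → X, ∏ k, f2 k (x (T k)) =
      (β ^ 2 * μpar * (Fintype.card X : ℝ)) ^ a * ((0:ℝ) ^ b * (0:ℝ) ^ b) *
        (Fintype.card X : ℝ) ^ (Fintype.card ι - (a + (b + b))) := by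
    rw [key_factor T hinj f2, hcard]
    congr 1
    simp only [hf2, Fintype.prod_sum_type, Sum.elim_inl, Sum.elim_inr,
      Finset.prod_const, Finset.card_univ, Fintype.card_fin, hm2', hmz]
  have hsplit : (∑ x : ι → X, (∏ j : Fin b, m (x (S' j)) * m (x (S'' j))) *
          ((∏ i : Fin a, q (x (S i))) - ∏ i : Fin a, (m (x (S i))) ^ 2))
      = (∑ x : ι → X, ∏ k, f1 k (x (T k))) - (∑ x : ι → X, ∏ k, f2 k (x (T k))) := by
    rw [← Finset.sum_sub_distrib]
    refine Finset.sum_congr rfl fun x _ => ?_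
    simp only [hf1, hf2, hT, Fintype.prod_sum_type, Sum.elim_inl, Sum.elim_inr,
      Finset.prod_mul_distrib]
    ring
  constructor
  · intro hb
    rw [hsplit, key1, key2, zero_pow (by omega : b ≠ 0)]
    ring
  · intro hb
    subst hb
    simp only [Nat.add_zero] at hab hle
    subst hab
    rw [hsplit, key1, key2]
    simp only [pow_zero, mul_one, one_mul, Nat.add_zero]
    have hpow : (Fintype.card X : ℝ) ^ a * (Fintype.card X : ℝ) ^ (Fintype.card ι - a)
        = (Fintype.card X : ℝ) ^ (Fintype.card ι) := by
      rw [← pow_add]; congr 1; omega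
    rw [mul_pow, hpow, mul_assoc, hpow]
    field_simp
end
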